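/- For any binary partition {G, G^c} of the message set with conditional (given Y^τ) posterior probabilities each at least λδ, the probability that a decoder deciding W at time T errs is at least the minimal error probability of the induced binary test of 'W ∈ G' versus 'W ∉ G' decided at time T; in particular, Pr[ Ŵ(Y^T) ≠ W | Y^τ ] ≥ (λδ/4) exp( −C_1 E[T − τ | Y^τ] ). -/

import Mathlib

set_option maxHeartbeats 1000000
set_option linter.unusedSectionVars false

open scoped BigOperators

/-- extension of a finite prefix by a default value -/
def extseq {Y : Type*} (y0 : Y) (j : ℕ) (u : Fin j → Y) : ℕ → Y :=
  fun i => if h : i < j then u ⟨i, h⟩ else y0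

/-- product of channel transition probabilities along a prefix -/
def gf {X Y W : Type*} (p : X → Y → ℝ) (f : W → (n : ℕ) → (Fin n → Y) → X) (w : W) :
    (j : ℕ) → (Fin j → Y) → ℝ
  | 0, _ => 1
  | j + 1, u => gf p f w j (Fin.init u) * p (f w j (Fin.init u)) (u (Fin.last j))

lemma gf_pos {X Y W : Type*} (p : X → Y → ℝ) (hpos : ∀ x y, 0 < p x y)
    (f : W → (n : ℕ) → (Fin n → Y) → X) (w : W) :
    ∀ (j : ℕ) (u : Fin j → Y), 0 < gf p f w j u := by
  intro j
  induction j with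
  | zero => intro u; simp [gf]
  | succ j ih => intro u; exact mul_pos (ih _) (hpos _ _)

lemma gf_snoc {X Y W : Type*} (p : X → Y → ℝ) (f : W → (n : ℕ) → (Fin n → Y) → X) (w : W)
    (j : ℕ) (u : Fin j → Y) (y : Y) :
    gf p f w (j + 1) (Fin.snoc u y) = gf p f w j u * p (f w j u) y := by
  simp [gf, Fin.init_snoc, Fin.snoc_last]

lemma gf_sum_snoc {X Y W : Type*} [Fintype Y] (p : X → Y → ℝ) (hsum : ∀ x, ∑ y, p x y = 1)
    (f : W → (n : ℕ) → (Fin n → Y) → X) (w : W) (j : ℕ) (u : Fin j → Y) :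
    ∑ y, gf p f w (j + 1) (Fin.snoc u y) = gf p f w j u := by
  simp only [gf_snoc]
  rw [← Finset.mul_sum, hsum, mul_one]

/-- recursive sum over the cells of the stopped tree: at a stopped node (or at the
maximal depth) take the leaf value, otherwise recurse over children. -/
def Csum {Y : Type*} [Fintype Y] (stp : (j : ℕ) → (Fin j → Y) → Bool)
    (lf lf0 : (j : ℕ) → (Fin j → Y) → ℝ) : ℕ → (j : ℕ) → (Fin j → Y) → ℝ
  | 0, j, u => if stp j u then lf j u else lf0 j u
  | d + 1, j, u => if stp j u then lf j u else ∑ y, Csum stp lf lf0 d (j + 1) (Fin.snoc u y)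

section CsumLemmas
variable {Y : Type*} [Fintype Y] (stp : (j : ℕ) → (Fin j → Y) → Bool)

lemma Csum_congr {lf lf0 lf' lf0' : (j : ℕ) → (Fin j → Y) → ℝ}
    (h : ∀ j u, lf j u = lf' j u) (h0 : ∀ j u, lf0 j u = lf0' j u) :
    ∀ d j u, Csum stp lf lf0 d j u = Csum stp lf' lf0' d j u := by
  intro d
  induction d with
  | zero => intro j u; simp only [Csum]; by_cases hs : stp j u <;> simp [hs, h, h0]
  | succ d ih =>
    intro j u; simp only [Csum]; by_cases hs : stp j u <;> simp [hs, h, ih]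

lemma Csum_mono {lf lf0 lf' lf0' : (j : ℕ) → (Fin j → Y) → ℝ}
    (h : ∀ j u, lf j u ≤ lf' j u) (h0 : ∀ j u, lf0 j u ≤ lf0' j u) :
    ∀ d j u, Csum stp lf lf0 d j u ≤ Csum stp lf' lf0' d j u := by
  intro d
  induction d with
  | zero => intro j u; simp only [Csum]; by_cases hs : stp j u <;> simp [hs, h, h0]
  | succ d ih =>
    intro j u; simp only [Csum]; by_cases hs : stp j u <;> simp only [hs, if_true, if_false]
    · exact h j u
    · exact Finset.sum_le_sum fun y _ => ih _ _

lemma Csum_add (lf lf0 lf' lf0' : (j : ℕ) → (Fin j → Y) → ℝ) :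
    ∀ d j u, Csum stp (fun j u => lf j u + lf' j u) (fun j u => lf0 j u + lf0' j u) d j u =
      Csum stp lf lf0 d j u + Csum stp lf' lf0' d j u := by
  intro d
  induction d with
  | zero => intro j u; simp only [Csum]; by_cases hs : stp j u <;> simp [hs]
  | succ d ih =>
    intro j u; simp only [Csum]; by_cases hs : stp j u <;> simp [hs, ih, Finset.sum_add_distrib]

lemma Csum_mul_left (c : ℝ) (lf lf0 : (j : ℕ) → (Fin j → Y) → ℝ) :
    ∀ d j u, Csum stp (fun j u => c * lf j u) (fun j u => c * lf0 j u) d j u =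
      c * Csum stp lf lf0 d j u := by
  intro d
  induction d with
  | zero => intro j u; simp only [Csum]; by_cases hs : stp j u <;> simp [hs]
  | succ d ih =>
    intro j u; simp only [Csum]; by_cases hs : stp j u <;> simp [hs, ih, Finset.mul_sum]

lemma Csum_nonneg {lf lf0 : (j : ℕ) → (Fin j → Y) → ℝ}
    (h : ∀ j u, 0 ≤ lf j u) (h0 : ∀ j u, 0 ≤ lf0 j u) :
    ∀ d j u, 0 ≤ Csum stp lf lf0 d j u := by
  intro d
  induction d with
  | zero => intro j u; simp only [Csum]; by_cases hs : stp j u <;> simp [hs, h, h0]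
  | succ d ih =>
    intro j u; simp only [Csum]; by_cases hs : stp j u <;> simp only [hs, if_true, if_false]
    · exact h j u
    · exact Finset.sum_nonneg fun y _ => ih _ _

lemma Csum_nonpos {lf lf0 : (j : ℕ) → (Fin j → Y) → ℝ}
    (h : ∀ j u, lf j u ≤ 0) (h0 : ∀ j u, lf0 j u ≤ 0) :
    ∀ d j u, Csum stp lf lf0 d j u ≤ 0 := by
  intro d
  induction d with
  | zero => intro j u; simp only [Csum]; by_cases hs : stp j u <;> simp [hs, h, h0]
  | succ d ih =>
    intro j u; simp only [Csum]; by_cases hs : stp j u <;> simp only [hs, if_true, if_false]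
    · exact h j u
    · exact Finset.sum_nonpos fun y _ => ih _ _

lemma Csum_pos [Nonempty Y] {lf lf0 : (j : ℕ) → (Fin j → Y) → ℝ}
    (h : ∀ j u, 0 < lf j u) (h0 : ∀ j u, 0 < lf0 j u) :
    ∀ d j u, 0 < Csum stp lf lf0 d j u := by
  intro d
  induction d with
  | zero => intro j u; simp only [Csum]; by_cases hs : stp j u <;> simp [hs, h, h0]
  | succ d ih =>
    intro j u; simp only [Csum]; by_cases hs : stp j u <;> simp only [hs, if_true, if_false]
    · exact h j u
    · exact Finset.sum_pos (fun y _ => ih _ _) Finset.univ_nonempty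

/-- conservation: if the leaf function is additive along children, the cell sum equals
the value at the root. -/
lemma Csum_conserve {lf : (j : ℕ) → (Fin j → Y) → ℝ}
    (h : ∀ j u, ∑ y, lf (j + 1) (Fin.snoc u y) = lf j u) :
    ∀ d j u, Csum stp lf lf d j u = lf j u := by
  intro d
  induction d with
  | zero => intro j u; simp only [Csum]; by_cases hs : stp j u <;> simp [hs]
  | succ d ih =>
    intro j u; simp only [Csum]; by_cases hs : stp j u <;> simp [hs, ih, h]

/-- Cauchy–Schwarz along the tree. -/
lemma Csum_cs {l mn mx : (j : ℕ) → (Fin j → Y) → ℝ}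
    (hl : ∀ j u, 0 ≤ l j u) (hmn : ∀ j u, 0 ≤ mn j u) (hmx : ∀ j u, 0 ≤ mx j u)
    (hsq : ∀ j u, (l j u) ^ 2 ≤ mn j u * mx j u) :
    ∀ d j u, (Csum stp l l d j u) ^ 2 ≤ Csum stp mn mn d j u * Csum stp mx mx d j u := by
  intro d
  induction d with
  | zero => intro j u; simp only [Csum]; by_cases hs : stp j u <;> simp [hs, hsq]
  | succ d ih =>
    intro j u; simp only [Csum]; by_cases hs : stp j u <;> simp only [hs, if_true, if_false]
    · exact hsq j u
    · calc (∑ y, Csum stp l l d (j+1) (Fin.snoc u y)) ^ 2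
          ≤ (∑ y, Real.sqrt (Csum stp mn mn d (j+1) (Fin.snoc u y)) *
              Real.sqrt (Csum stp mx mx d (j+1) (Fin.snoc u y))) ^ 2 := by
            apply pow_le_pow_left₀ (Finset.sum_nonneg fun y _ => Csum_nonneg stp hl hl d _ _)
            apply Finset.sum_le_sum
            intro y _
            rw [← Real.sqrt_mul (Csum_nonneg stp hmn hmn d _ _)]
            rw [show Csum stp l l d (j+1) (Fin.snoc u y) =
              √((Csum stp l l d (j+1) (Fin.snoc u y))^2) from
              (Real.sqrt_sq (Csum_nonneg stp hl hl d _ _)).symm]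
            exact Real.sqrt_le_sqrt (ih _ _)
        _ ≤ (∑ y, Real.sqrt (Csum stp mn mn d (j+1) (Fin.snoc u y)) ^ 2) *
            (∑ y, Real.sqrt (Csum stp mx mx d (j+1) (Fin.snoc u y)) ^ 2) :=
            Finset.sum_mul_sq_le_sq_mul_sq _ _ _
        _ = _ := by
            congr 1 <;> exact Finset.sum_congr rfl fun y _ =>
              Real.sq_sqrt (by first
                | exact Csum_nonneg stp hmn hmn d _ _
                | exact Csum_nonneg stp hmx hmx d _ _)

end CsumLemmas
/-- The cylinder set of output sequences agreeing with `v` on the first `n` coordinates. -/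
def cylinder {Y : Type*} (n : ℕ) (v : ℕ → Y) : Set (ℕ → Y) :=
  {ω | ∀ i < n, ω i = v i}

/-- The set of output sequences stopped by `S` at the leaf `s` of the observation tree. -/
def stopCell {Y : Type*} (S : (ℕ → Y) → ℕ) (s : Σ n, Fin n → Y) : Set (ℕ → Y) :=
  {ω | S ω = s.1 ∧ ∀ i : Fin s.1, ω i = s.2 i}
open scoped BigOperators

/-- log-sum inequality -/
lemma logSumIneq {ι : Type*} (s : Finset ι) (c e : ι → ℝ)
    (hc : ∀ i ∈ s, 0 < c i) (he : ∀ i ∈ s, 0 < e i) (hs : s.Nonempty) :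
    (∑ i ∈ s, c i) * Real.log ((∑ i ∈ s, c i) / (∑ i ∈ s, e i)) ≤
      ∑ i ∈ s, c i * Real.log (c i / e i) := by
  set C := ∑ i ∈ s, c i with hC
  set E := ∑ i ∈ s, e i with hE
  have hCpos : 0 < C := Finset.sum_pos hc hs
  have hEpos : 0 < E := Finset.sum_pos he hs
  have key : ∀ i ∈ s, c i * Real.log (C / E) - c i * Real.log (c i / e i) ≤
      (C / E) * e i - c i := by
    intro i hi
    have hci := hc i hi
    have hei := he i hi
    have h1 : Real.log (C / E) - Real.log (c i / e i) = Real.log ((C * e i) / (E * c i)) := by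
      rw [Real.log_div (by positivity) (by positivity), Real.log_div hci.ne' hei.ne',
        Real.log_div (by positivity) (by positivity), Real.log_mul (by positivity) hei.ne',
        Real.log_mul (by positivity) hci.ne']
      ring
    have h2 : Real.log ((C * e i) / (E * c i)) ≤ (C * e i) / (E * c i) - 1 :=
      Real.log_le_sub_one_of_pos (by positivity)
    have : c i * (Real.log (C / E) - Real.log (c i / e i)) ≤
        c i * ((C * e i) / (E * c i) - 1) :=
      mul_le_mul_of_nonneg_left (h1 ▸ h2) hci.le
    calc c i * Real.log (C / E) - c i * Real.log (c i / e i)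
        = c i * (Real.log (C / E) - Real.log (c i / e i)) := by ring
      _ ≤ c i * ((C * e i) / (E * c i) - 1) := this
      _ = (C / E) * e i - c i := by field_simp
  have hsum := Finset.sum_le_sum key
  rw [Finset.sum_sub_distrib, ← Finset.sum_mul, Finset.sum_sub_distrib,
    ← Finset.mul_sum] at hsum
  have : C * Real.log (C / E) - ∑ i ∈ s, c i * Real.log (c i / e i) ≤
      C / E * E - C := hsum
  rw [div_mul_cancel₀ _ hEpos.ne'] at this
  linarith

/-- the conditional KL divergence of two mixtures of channel rows is at most the
maximal pairwise divergence `C1`, in the unnormalized form needed for the chain rule. -/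
lemma mixtureKL {X Y : Type*} [Fintype X] [Fintype Y] {ιP ιQ : Type*}
    (p : X → Y → ℝ) (hpos : ∀ x y, 0 < p x y) (hsum : ∀ x, ∑ y, p x y = 1)
    (C1 : ℝ) (hC1 : ∀ x x', ∑ y, p x y * Real.log (p x y / p x' y) ≤ C1)
    (sP : Finset ιP) (sQ : Finset ιQ) (hsP : sP.Nonempty) (hsQ : sQ.Nonempty)
    (α : ιP → ℝ) (β : ιQ → ℝ) (hα : ∀ i ∈ sP, 0 < α i) (hβ : ∀ i ∈ sQ, 0 < β i)
    (xP : ιP → X) (xQ : ιQ → X) :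
    ∑ y, (∑ i ∈ sP, α i * p (xP i) y) *
        Real.log ((∑ i ∈ sP, α i * p (xP i) y) / (∑ i ∈ sQ, β i * p (xQ i) y)) ≤
      (∑ i ∈ sP, α i) * Real.log ((∑ i ∈ sP, α i) / (∑ i ∈ sQ, β i)) +
        C1 * (∑ i ∈ sP, α i) := by
  set A := ∑ i ∈ sP, α i with hA
  set B := ∑ i ∈ sQ, β i with hB
  have hApos : 0 < A := Finset.sum_pos hα hsP
  have hBpos : 0 < B := Finset.sum_pos hβ hsQ
  -- per-y application of log-sum over the product index
  have step : ∀ y, (∑ i ∈ sP, α i * p (xP i) y) *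
      Real.log ((∑ i ∈ sP, α i * p (xP i) y) / (∑ i ∈ sQ, β i * p (xQ i) y)) ≤
      ∑ ij ∈ sP ×ˢ sQ, (α ij.1 * β ij.2 * p (xP ij.1) y / B) *
        Real.log ((α ij.1 * β ij.2 * p (xP ij.1) y / B) /
          (α ij.1 * β ij.2 * p (xQ ij.2) y / A)) := by
    intro y
    have hc : ∀ ij ∈ sP ×ˢ sQ, 0 < α ij.1 * β ij.2 * p (xP ij.1) y / B := by
      intro ij hij
      rw [Finset.mem_product] at hij
      have := hα _ hij.1; have := hβ _ hij.2; have := hpos (xP ij.1) y; positivity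
    have he : ∀ ij ∈ sP ×ˢ sQ, 0 < α ij.1 * β ij.2 * p (xQ ij.2) y / A := by
      intro ij hij
      rw [Finset.mem_product] at hij
      have := hα _ hij.1; have := hβ _ hij.2; have := hpos (xQ ij.2) y; positivity
    have hne : (sP ×ˢ sQ).Nonempty := hsP.product hsQ
    have hls := logSumIneq (sP ×ˢ sQ) _ _ hc he hne
    have hcsum : ∑ ij ∈ sP ×ˢ sQ, α ij.1 * β ij.2 * p (xP ij.1) y / B =
        ∑ i ∈ sP, α i * p (xP i) y := by
      rw [Finset.sum_product]
      refine Finset.sum_congr rfl fun i _ => ?_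
      have h1 : (∑ j ∈ sQ, α i * β j * p (xP i) y / B) =
          (α i * p (xP i) y / B) * ∑ j ∈ sQ, β j := by
        rw [Finset.mul_sum]; exact Finset.sum_congr rfl fun j _ => by ring
      rw [h1, ← hB]; field_simp
    have hesum : ∑ ij ∈ sP ×ˢ sQ, α ij.1 * β ij.2 * p (xQ ij.2) y / A =
        ∑ i ∈ sQ, β i * p (xQ i) y := by
      rw [Finset.sum_product, Finset.sum_comm]
      refine Finset.sum_congr rfl fun j _ => ?_
      have h1 : (∑ i ∈ sP, α i * β j * p (xQ j) y / A) =
          (β j * p (xQ j) y / A) * ∑ i ∈ sP, α i := by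
        rw [Finset.mul_sum]; exact Finset.sum_congr rfl fun i _ => by ring
      rw [h1, ← hA]; field_simp
    rw [hcsum, hesum] at hls
    exact hls
  calc ∑ y, (∑ i ∈ sP, α i * p (xP i) y) *
      Real.log ((∑ i ∈ sP, α i * p (xP i) y) / (∑ i ∈ sQ, β i * p (xQ i) y))
      ≤ ∑ y, ∑ ij ∈ sP ×ˢ sQ, (α ij.1 * β ij.2 * p (xP ij.1) y / B) *
          Real.log ((α ij.1 * β ij.2 * p (xP ij.1) y / B) /
            (α ij.1 * β ij.2 * p (xQ ij.2) y / A)) :=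
        Finset.sum_le_sum fun y _ => step y
    _ = ∑ ij ∈ sP ×ˢ sQ, (α ij.1 * β ij.2 / B) *
          ∑ y, p (xP ij.1) y * (Real.log (p (xP ij.1) y / p (xQ ij.2) y) + Real.log (A / B)) := by
        rw [Finset.sum_comm]
        refine Finset.sum_congr rfl fun ij hij => ?_
        rw [Finset.mem_product] at hij
        have hαi := hα _ hij.1; have hβj := hβ _ hij.2
        rw [Finset.mul_sum]
        refine Finset.sum_congr rfl fun y _ => ?_
        have hp1 := hpos (xP ij.1) y; have hp2 := hpos (xQ ij.2) y
        have harg : (α ij.1 * β ij.2 * p (xP ij.1) y / B) /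
            (α ij.1 * β ij.2 * p (xQ ij.2) y / A) =
            (p (xP ij.1) y / p (xQ ij.2) y) * (A / B) := by
          field_simp
        rw [harg, Real.log_mul (by positivity) (by positivity)]
        ring
    _ ≤ ∑ ij ∈ sP ×ˢ sQ, (α ij.1 * β ij.2 / B) * (C1 + Real.log (A / B)) := by
        refine Finset.sum_le_sum fun ij hij => ?_
        rw [Finset.mem_product] at hij
        have hαi := hα _ hij.1; have hβj := hβ _ hij.2
        refine mul_le_mul_of_nonneg_left ?_ (by positivity)
        have : ∑ y, p (xP ij.1) y * (Real.log (p (xP ij.1) y / p (xQ ij.2) y) + Real.log (A / B))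
            = (∑ y, p (xP ij.1) y * Real.log (p (xP ij.1) y / p (xQ ij.2) y)) +
              (∑ y, p (xP ij.1) y) * Real.log (A / B) := by
          rw [Finset.sum_mul, ← Finset.sum_add_distrib]
          exact Finset.sum_congr rfl fun y _ => by ring
        rw [this, hsum]
        have := hC1 (xP ij.1) (xQ ij.2)
        linarith
    _ = A * Real.log (A / B) + C1 * A := by
        rw [← Finset.sum_mul]
        have : ∑ ij ∈ sP ×ˢ sQ, α ij.1 * β ij.2 / B = A := by
          rw [Finset.sum_product]
          have key2 : ∀ i ∈ sP, ∑ j ∈ sQ, α i * β j / B = α i := by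
            intro i _
            have h1 : (∑ j ∈ sQ, α i * β j / B) = (α i / B) * ∑ j ∈ sQ, β j := by
              rw [Finset.mul_sum]; exact Finset.sum_congr rfl fun j _ => by ring
            rw [h1, ← hB]; field_simp
          rw [Finset.sum_congr rfl key2]
        rw [this]; ring
section Tree
variable {Y : Type*} [Fintype Y] [Nonempty Y] (stp : (j : ℕ) → (Fin j → Y) → Bool)

/-- chain rule: the divergence of the stopped leaf distributions is controlled by the
root likelihood ratio plus `C1` times the expected number of steps. -/
lemma chainRuleKL (C1 : ℝ) (P Q : (j : ℕ) → (Fin j → Y) → ℝ)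
    (hPsum : ∀ j u, ∑ y, P (j + 1) (Fin.snoc u y) = P j u)
    (hmix : ∀ j u, ∑ y, P (j + 1) (Fin.snoc u y) *
        Real.log (P (j + 1) (Fin.snoc u y) / Q (j + 1) (Fin.snoc u y)) ≤
      P j u * Real.log (P j u / Q j u) + C1 * P j u) :
    ∀ d j u, Csum stp (fun j u => P j u * Real.log (P j u / Q j u))
        (fun j u => P j u * Real.log (P j u / Q j u)) d j u ≤
      P j u * Real.log (P j u / Q j u) +
        C1 * (Csum stp (fun j u => (j : ℝ) * P j u)
          (fun j u => (j : ℝ) * P j u) d j u - (j : ℝ) * P j u) := by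
  intro d
  induction d with
  | zero => intro j u; simp [Csum]
  | succ d ih =>
    intro j u
    by_cases hs : stp j u
    · simp [Csum, hs]
    · simp only [Csum, hs, Bool.false_eq_true, if_false]
      have h1 : ∑ y, Csum stp (fun j u => P j u * Real.log (P j u / Q j u))
          (fun j u => P j u * Real.log (P j u / Q j u)) d (j+1) (Fin.snoc u y) ≤
          ∑ y, (P (j+1) (Fin.snoc u y) *
            Real.log (P (j+1) (Fin.snoc u y) / Q (j+1) (Fin.snoc u y)) +
            C1 * (Csum stp (fun j u => (j : ℝ) * P j u)
              (fun j u => (j : ℝ) * P j u) d (j+1) (Fin.snoc u y) -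
              ((j+1 : ℕ) : ℝ) * P (j+1) (Fin.snoc u y))) :=
        Finset.sum_le_sum fun y _ => ih (j+1) (Fin.snoc u y)
      have h2 : ∑ y, (P (j+1) (Fin.snoc u y) *
            Real.log (P (j+1) (Fin.snoc u y) / Q (j+1) (Fin.snoc u y)) +
            C1 * (Csum stp (fun j u => (j : ℝ) * P j u)
              (fun j u => (j : ℝ) * P j u) d (j+1) (Fin.snoc u y) -
              ((j+1 : ℕ) : ℝ) * P (j+1) (Fin.snoc u y))) =
          (∑ y, P (j+1) (Fin.snoc u y) *
            Real.log (P (j+1) (Fin.snoc u y) / Q (j+1) (Fin.snoc u y))) +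
          C1 * ((∑ y, Csum stp (fun j u => (j : ℝ) * P j u)
              (fun j u => (j : ℝ) * P j u) d (j+1) (Fin.snoc u y)) -
              ((j+1 : ℕ) : ℝ) * P j u) := by
        rw [Finset.sum_add_distrib, ← Finset.mul_sum, Finset.sum_sub_distrib,
          ← Finset.mul_sum, hPsum]
      rw [h2] at h1
      have h3 := hmix j u
      push_cast at h1 ⊢
      nlinarith [h1, h3]

/-- Jensen / Bhattacharyya: lower bound on the stopped Bhattacharyya sum in terms of the
stopped divergence. -/
lemma jensenBC (P Q : (j : ℕ) → (Fin j → Y) → ℝ)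
    (hP : ∀ j u, 0 < P j u) (hQ : ∀ j u, 0 < Q j u)
    (hPsum : ∀ j u, ∑ y, P (j + 1) (Fin.snoc u y) = P j u)
    (d : ℕ) (j : ℕ) (u : Fin j → Y) :
    Real.sqrt (P j u * Q j u) *
      Real.exp (-(Csum stp (fun j u => P j u * Real.log (P j u / Q j u))
          (fun j u => P j u * Real.log (P j u / Q j u)) d j u / P j u -
        Real.log (P j u / Q j u)) / 2) ≤
    Csum stp (fun j u => Real.sqrt (P j u * Q j u))
      (fun j u => Real.sqrt (P j u * Q j u)) d j u := by
  set a := P j u with ha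
  set b := Q j u with hb
  have hapos : 0 < a := hP j u
  have hbpos : 0 < b := hQ j u
  set BC := Csum stp (fun j u => Real.sqrt (P j u * Q j u))
      (fun j u => Real.sqrt (P j u * Q j u)) d j u with hBC
  set DD := Csum stp (fun j u => P j u * Real.log (P j u / Q j u))
      (fun j u => P j u * Real.log (P j u / Q j u)) d j u with hDD
  have hBCpos : 0 < BC :=
    Csum_pos stp (fun j u => Real.sqrt_pos.2 (mul_pos (hP j u) (hQ j u)))
      (fun j u => Real.sqrt_pos.2 (mul_pos (hP j u) (hQ j u))) d j u
  set B := BC / Real.sqrt (a * b) with hBdef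
  have hsqrtab : 0 < Real.sqrt (a * b) := Real.sqrt_pos.2 (mul_pos hapos hbpos)
  have hBpos : 0 < B := div_pos hBCpos hsqrtab
  -- pointwise inequality: t (log x - x + 1) ≤ 0
  have hpt : ∀ (j' : ℕ) (u' : Fin j' → Y),
      P j' u' * (Real.log (Real.sqrt (Q j' u' * a / (P j' u' * b)) / B) -
        Real.sqrt (Q j' u' * a / (P j' u' * b)) / B + 1) ≤ 0 := by
    intro j' u'
    have hx : 0 < Real.sqrt (Q j' u' * a / (P j' u' * b)) / B := by
      have := hP j' u'; have := hQ j' u'; positivity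
    have := Real.log_le_sub_one_of_pos hx
    nlinarith [(hP j' u').le, this]
  have hkey : Csum stp
      (fun j' u' => P j' u' * (Real.log (Real.sqrt (Q j' u' * a / (P j' u' * b)) / B) -
        Real.sqrt (Q j' u' * a / (P j' u' * b)) / B + 1))
      (fun j' u' => P j' u' * (Real.log (Real.sqrt (Q j' u' * a / (P j' u' * b)) / B) -
        Real.sqrt (Q j' u' * a / (P j' u' * b)) / B + 1)) d j u ≤ 0 :=
    Csum_nonpos stp hpt hpt d j u
  -- decompose the leaf
  have hdecomp : ∀ (j' : ℕ) (u' : Fin j' → Y),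
      P j' u' * (Real.log (Real.sqrt (Q j' u' * a / (P j' u' * b)) / B) -
        Real.sqrt (Q j' u' * a / (P j' u' * b)) / B + 1) =
      ((-(1/2)) * (P j' u' * Real.log (P j' u' / Q j' u')) +
        ((Real.log (a / b) / 2 - Real.log B + 1) * P j' u' +
        (-(Real.sqrt (a / b) / B)) * Real.sqrt (P j' u' * Q j' u'))) := by
    intro j' u'
    have hPp := hP j' u'
    have hQp := hQ j' u'
    have e1 : Real.log (Real.sqrt (Q j' u' * a / (P j' u' * b)) / B) =
        (1/2) * (Real.log (Q j' u' / P j' u') + Real.log (a / b)) - Real.log B := by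
      rw [Real.log_div (by positivity) hBpos.ne', Real.log_sqrt (by positivity),
        show Q j' u' * a / (P j' u' * b) = (Q j' u' / P j' u') * (a / b) by
          field_simp,
        Real.log_mul (by positivity) (by positivity)]
      ring
    have e2 : P j' u' * (Real.sqrt (Q j' u' * a / (P j' u' * b))) =
        Real.sqrt (a / b) * Real.sqrt (P j' u' * Q j' u') := by
      rw [← Real.sqrt_sq hPp.le, ← Real.sqrt_mul (by positivity),
        ← Real.sqrt_mul (by positivity)]
      congr 1
      field_simp
      ring
      rw [Real.sq_sqrt (by positivity)]
    have e3 : Real.log (Q j' u' / P j' u') = - Real.log (P j' u' / Q j' u') := by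
      rw [← Real.log_inv, inv_div]
    rw [mul_add, mul_sub, e1, e3]
    rw [show P j' u' * (Real.sqrt (Q j' u' * a / (P j' u' * b)) / B) =
      (P j' u' * Real.sqrt (Q j' u' * a / (P j' u' * b))) / B by ring, e2]
    field_simp
    ring
  rw [Csum_congr stp hdecomp hdecomp d j u] at hkey
  rw [Csum_add stp _ _ _ _ d j u, Csum_add stp _ _ _ _ d j u,
    Csum_mul_left stp _ _ _ d j u, Csum_mul_left stp _ _ _ d j u,
    Csum_mul_left stp _ _ _ d j u] at hkey
  have hcons : Csum stp P P d j u = a := Csum_conserve stp hPsum d j u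
  rw [hcons, ← hDD, ← hBC] at hkey
  -- hkey : -(1/2) * DD + ((log(a/b)/2 - log B + 1) * a + (-(√(a/b)/B)) * BC) ≤ 0
  have hBCeq : Real.sqrt (a / b) / B * BC = a := by
    have h1 : Real.sqrt (a / b) * Real.sqrt (a * b) = a := by
      rw [← Real.sqrt_mul (by positivity)]
      rw [show a / b * (a * b) = a ^ 2 by field_simp, Real.sqrt_sq hapos.le]
    rw [hBdef, div_div_eq_mul_div, div_mul_cancel₀ _ hBCpos.ne', h1]
  have hlogB : -(DD / a - Real.log (a / b)) / 2 ≤ Real.log B := by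
    have h6 : (a * Real.log (a / b) - DD) / 2 ≤ a * Real.log B := by
      nlinarith [hkey, hBCeq]
    have hinv : a * a⁻¹ = 1 := mul_inv_cancel₀ hapos.ne'
    have h8 : DD * (a * a⁻¹) = DD := by rw [hinv, mul_one]
    rw [div_eq_mul_inv DD a, ← sub_nonneg]
    nlinarith [h6, hapos, h8]
  have hBC2 : BC = Real.sqrt (a * b) * B := by
    rw [hBdef]
    field_simp
  calc Real.sqrt (a * b) * Real.exp (-(DD / a - Real.log (a / b)) / 2)
      ≤ Real.sqrt (a * b) * B := by
        refine mul_le_mul_of_nonneg_left ?_ hsqrtab.le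
        calc Real.exp (-(DD / a - Real.log (a / b)) / 2) ≤ Real.exp (Real.log B) :=
              Real.exp_le_exp.2 hlogB
          _ = B := Real.exp_log hBpos
    _ = BC := hBC2.symm
end Tree
section PmassSec
variable {X Y W : Type*} [Fintype Y]

/-- total path probability of a set of messages -/
def Pmass (p : X → Y → ℝ) (f : W → (n : ℕ) → (Fin n → Y) → X) (H : Finset W)
    (j : ℕ) (u : Fin j → Y) : ℝ := ∑ w ∈ H, gf p f w j u

lemma Pmass_pos (p : X → Y → ℝ) (hpos : ∀ x y, 0 < p x y)
    (f : W → (n : ℕ) → (Fin n → Y) → X) (H : Finset W) (hH : H.Nonempty)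
    (j : ℕ) (u : Fin j → Y) : 0 < Pmass p f H j u :=
  Finset.sum_pos (fun w _ => gf_pos p hpos f w j u) hH

lemma Pmass_sum_snoc (p : X → Y → ℝ) (hsum : ∀ x, ∑ y, p x y = 1)
    (f : W → (n : ℕ) → (Fin n → Y) → X) (H : Finset W) (j : ℕ) (u : Fin j → Y) :
    ∑ y, Pmass p f H (j + 1) (Fin.snoc u y) = Pmass p f H j u := by
  unfold Pmass
  rw [Finset.sum_comm]
  exact Finset.sum_congr rfl fun w _ => gf_sum_snoc p hsum f w j u

lemma Pmass_snoc (p : X → Y → ℝ) (f : W → (n : ℕ) → (Fin n → Y) → X) (H : Finset W)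
    (j : ℕ) (u : Fin j → Y) (y : Y) :
    Pmass p f H (j + 1) (Fin.snoc u y) = ∑ w ∈ H, gf p f w j u * p (f w j u) y :=
  Finset.sum_congr rfl fun w _ => gf_snoc p f w j u y

end PmassSec
section Meas
variable {Y : Type*} [MeasurableSpace Y] [MeasurableSingletonClass Y]

lemma cylinder_measurable (n : ℕ) (v : ℕ → Y) : MeasurableSet (cylinder n v) := by
  have h : cylinder n v = ⋂ i ∈ Set.Iio n, (fun ω : ℕ → Y => ω i) ⁻¹' {v i} := by
    ext ω; simp [cylinder]
  rw [h]
  exact MeasurableSet.biInter (Set.to_countable _) fun i _ =>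
    (measurable_pi_apply i) (measurableSet_singleton _)

lemma cylinder_congr' (n : ℕ) (v v' : ℕ → Y) (h : ∀ i < n, v i = v' i) :
    cylinder n v = cylinder n v' := by
  ext ω
  constructor <;> intro hω i hi
  · exact (hω i hi).trans (h i hi)
  · exact (hω i hi).trans (h i hi).symm

end Meas

section Cyl
variable {Y : Type*} (y0 : Y)

lemma mem_cylinder_ext {j : ℕ} (u : Fin j → Y) (ω : ℕ → Y) :
    ω ∈ cylinder j (extseq y0 j u) ↔ ∀ i : Fin j, ω i = u i := by
  constructor
  · intro h i
    have := h i i.2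
    rwa [extseq, dif_pos i.2, Fin.eta] at this
  · intro h i hi
    rw [extseq, dif_pos hi]
    exact h ⟨i, hi⟩

lemma cylinder_ext_succ (j : ℕ) (u : Fin j → Y) :
    cylinder j (extseq y0 j u) =
      ⋃ y, cylinder (j + 1) (extseq y0 (j + 1) (Fin.snoc u y)) := by
  ext ω
  simp only [Set.mem_iUnion, mem_cylinder_ext]
  constructor
  · intro h
    refine ⟨ω j, fun i => ?_⟩
    refine Fin.lastCases ?_ (fun k => ?_) i
    · rw [Fin.snoc_last]
      rfl
    · rw [Fin.snoc_castSucc]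
      exact h k
  · rintro ⟨y, hy⟩ i
    have := hy (Fin.castSucc i)
    rwa [Fin.snoc_castSucc] at this

lemma cylinder_ext_disj (j : ℕ) (u : Fin j → Y) :
    Pairwise (Function.onFun Disjoint
      fun y => cylinder (j + 1) (extseq y0 (j + 1) (Fin.snoc u y))) := by
  intro y y' hne
  rw [Function.onFun, Set.disjoint_left]
  intro ω h1 h2
  rw [mem_cylinder_ext] at h1 h2
  have e1 := h1 (Fin.last j)
  have e2 := h2 (Fin.last j)
  rw [Fin.snoc_last] at e1 e2
  exact hne (e1.symm.trans e2)

end Cyl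

lemma sigma_leaf_eq {Y : Type*} (k j : ℕ) (h : k = j) (ω : ℕ → Y) (u : Fin j → Y)
    (hu : ∀ i : Fin j, ω i = u i) :
    (⟨k, fun i : Fin k => ω i⟩ : Σ n, Fin n → Y) = ⟨j, u⟩ := by
  subst h
  exact Sigma.ext rfl (heq_of_eq (funext fun i => hu i))
open MeasureTheory in
/-- Variable-length transmission of a uniformly distributed message over a DMC with feedback:
`μ w` is the output distribution given message `w`.  For any partition `{G(Y^τ), G(Y^τ)ᶜ}` of
the message set whose posterior probabilities given `Y^τ` lie in `[λδ, 1−λδ]`, and any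
realization `y^τ` of positive probability: (i) the conditional error probability of the
induced binary test of `W ∈ G` versus `W ∉ G` (declare `W ∈ G` iff `Ŵ ∈ G`, decided at time
`T`) is at most the conditional probability that the decoder errs; and (ii) in particular
`Pr[Ŵ(Y^T) ≠ W | Y^τ] ≥ (λδ/4) exp(−C₁ E[T − τ | Y^τ])`. -/
theorem stmt18 {X Y W : Type*} [Fintype X] [Fintype Y] [Fintype W]
    [Nonempty X] [Nonempty Y] [Nonempty W] [DecidableEq W]
    [MeasurableSpace Y] [MeasurableSingletonClass Y]
    (p : X → Y → ℝ) (hpos : ∀ x y, 0 < p x y) (hsum : ∀ x, ∑ y, p x y = 1)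
    (f : W → (n : ℕ) → (Fin n → Y) → X)
    (μ : W → Measure (ℕ → Y)) (hprob : ∀ w, IsProbabilityMeasure (μ w))
    (hchan : ∀ (w : W) (n : ℕ) (v : ℕ → Y),
      μ w (cylinder (n + 1) v) =
        μ w (cylinder n v) * ENNReal.ofReal (p (f w n fun i => v i) (v n)))
    (T τ : (ℕ → Y) → ℕ)
    (hstopT : ∀ (n : ℕ) (ω ω' : ℕ → Y), (∀ i < n, ω i = ω' i) → (T ω = n ↔ T ω' = n))
    (hstopτ : ∀ (n : ℕ) (ω ω' : ℕ → Y), (∀ i < n, ω i = ω' i) → (τ ω = n ↔ τ ω' = n))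
    (hle : ∀ ω, τ ω ≤ T ω)
    (hTint : ∀ w, Integrable (fun ω => (T ω : ℝ)) (μ w))
    (C1 lam δ : ℝ) (hC1 : 0 < C1)
    (hC1def : C1 = ⨆ x, ⨆ x', ∑ y, p x y * Real.log (p x y / p x' y))
    (hld : 0 < lam * δ) (hld1 : lam * δ ≤ 1)
    (G : (Σ n, Fin n → Y) → Finset W)
    (d : (Σ n, Fin n → Y) → W)
    (hpost : ∀ s : Σ n, Fin n → Y, 0 < ∑ w, (μ w (stopCell τ s)).toReal →
      lam * δ ≤ (∑ w ∈ G s, (μ w (stopCell τ s)).toReal) /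
          (∑ w, (μ w (stopCell τ s)).toReal) ∧
        (∑ w ∈ G s, (μ w (stopCell τ s)).toReal) / (∑ w, (μ w (stopCell τ s)).toReal)
          ≤ 1 - lam * δ) :
    ∀ s : Σ n, Fin n → Y, 0 < ∑ w, (μ w (stopCell τ s)).toReal →
      (∑ w, (μ w ({ω | (d ⟨T ω, fun i => ω i⟩ ∈ G s) ≠ (w ∈ G s)} ∩ stopCell τ s)).toReal) /
            (∑ w, (μ w (stopCell τ s)).toReal)
          ≤ (∑ w, (μ w ({ω | d ⟨T ω, fun i => ω i⟩ ≠ w} ∩ stopCell τ s)).toReal) /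
            (∑ w, (μ w (stopCell τ s)).toReal) ∧
        lam * δ / 4 * Real.exp (-(C1 *
              ((∑ w, ∫ ω in stopCell τ s, ((T ω : ℝ) - (τ ω : ℝ)) ∂μ w) /
                (∑ w, (μ w (stopCell τ s)).toReal))))
          ≤ (∑ w, (μ w ({ω | d ⟨T ω, fun i => ω i⟩ ≠ w} ∩ stopCell τ s)).toReal) /
            (∑ w, (μ w (stopCell τ s)).toReal) := by
  intro s hs
  classical
  set y0 : Y := Classical.arbitrary Y with hy0
  set m := s.1 with hm
  -- the conditioning cell is a cylinder
  have hAne : (stopCell τ s).Nonempty := by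
    by_contra h
    rw [Set.not_nonempty_iff_eq_empty] at h
    rw [h] at hs
    simp at hs
  obtain ⟨ω₀, hω₀1, hω₀2⟩ := hAne
  have hτext : τ (extseq y0 m s.2) = m := by
    refine (hstopτ m ω₀ _ fun i hi => ?_).mp hω₀1
    rw [extseq, dif_pos hi]
    exact hω₀2 ⟨i, hi⟩
  have hA : stopCell τ s = cylinder m (extseq y0 m s.2) := by
    ext ω
    rw [mem_cylinder_ext]
    constructor
    · rintro ⟨h1, h2⟩ i
      exact h2 i
    · intro h
      refine ⟨?_, h⟩
      refine (hstopτ m (extseq y0 m s.2) ω fun i hi => ?_).mp hτext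
      rw [extseq, dif_pos hi]
      exact (h ⟨i, hi⟩).symm
  -- measure of cylinders
  have hμcyl : ∀ (w : W) (j : ℕ) (u : Fin j → Y),
      μ w (cylinder j (extseq y0 j u)) = ENNReal.ofReal (gf p f w j u) := by
    intro w j
    induction j with
    | zero =>
      intro u
      have h0 : cylinder 0 (extseq y0 0 u) = Set.univ := by
        ext ω; simp [_root_.cylinder]
      haveI := hprob w
      rw [h0]
      simp [gf]
    | succ j ih =>
      intro u
      have hstep := hchan w j (extseq y0 (j + 1) u)
      have hcyl_eq : cylinder j (extseq y0 (j + 1) u) =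
          cylinder j (extseq y0 j (Fin.init u)) := by
        refine cylinder_congr' j _ _ fun i hi => ?_
        rw [extseq, extseq, dif_pos hi, dif_pos (Nat.lt_succ_of_lt hi)]
        exact (congrArg u (Fin.ext rfl)).symm ▸ rfl
      have harg : (fun i : Fin j => extseq y0 (j + 1) u i) = Fin.init u := by
        funext i
        rw [extseq, dif_pos (Nat.lt_succ_of_lt i.2)]
        show u _ = u (Fin.castSucc i)
        exact congrArg u (Fin.ext rfl)
      have hlast : extseq y0 (j + 1) u j = u (Fin.last j) := by
        rw [extseq, dif_pos (Nat.lt_succ_self j)]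
        exact congrArg u (Fin.ext rfl)
      rw [hstep, hcyl_eq, ih, harg, hlast]
      rw [show gf p f w (j + 1) u =
        gf p f w j (Fin.init u) * p (f w j (Fin.init u)) (u (Fin.last j)) from rfl]
      rw [ENNReal.ofReal_mul (gf_pos p hpos f w j (Fin.init u)).le]
  have hμcylR : ∀ (w : W) (j : ℕ) (u : Fin j → Y),
      (μ w (cylinder j (extseq y0 j u))).toReal = gf p f w j u := fun w j u => by
    rw [hμcyl]
    exact ENNReal.toReal_ofReal (gf_pos p hpos f w j u).le
  set H := G s with hH
  set K := (G s)ᶜ with hK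
  set a := Pmass p f H m s.2 with haa
  set b := Pmass p f K m s.2 with hbb
  have hμA : ∀ w : W, (μ w (stopCell τ s)).toReal = gf p f w m s.2 := fun w => by
    rw [hA, hμcylR]
  have hZ : ∑ w, (μ w (stopCell τ s)).toReal = a + b := by
    rw [← Finset.sum_add_sum_compl H fun w => (μ w (stopCell τ s)).toReal]
    congr 1 <;> exact Finset.sum_congr rfl fun w _ => hμA w
  have haA : ∑ w ∈ G s, (μ w (stopCell τ s)).toReal = a :=
    Finset.sum_congr rfl fun w _ => hμA w
  obtain ⟨hp1, hp2⟩ := hpost s hs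
  have hZpos : 0 < a + b := hZ ▸ hs
  rw [haA, hZ] at hp1 hp2
  have haZ : lam * δ * (a + b) ≤ a := by
    rw [le_div_iff₀ hZpos] at hp1
    linarith
  have hbZ : lam * δ * (a + b) ≤ b := by
    rw [div_le_iff₀ hZpos] at hp2
    nlinarith
  have hapos : 0 < a := lt_of_lt_of_le (mul_pos hld hZpos) haZ
  have hbpos : 0 < b := lt_of_lt_of_le (mul_pos hld hZpos) hbZ
  have hHne : H.Nonempty := by
    by_contra h
    rw [Finset.not_nonempty_iff_eq_empty] at h
    rw [haa, Pmass, h, Finset.sum_empty] at hapos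
    exact lt_irrefl _ hapos
  have hKne : K.Nonempty := by
    by_contra h
    rw [Finset.not_nonempty_iff_eq_empty] at h
    rw [hbb, Pmass, h, Finset.sum_empty] at hbpos
    exact lt_irrefl _ hbpos
  have hld2 : lam * δ ≤ 1 / 2 := by
    have := hp1.trans hp2
    linarith
  have hC1' : ∀ x x', ∑ y, p x y * Real.log (p x y / p x' y) ≤ C1 := by
    intro x x'
    rw [hC1def]
    calc ∑ y, p x y * Real.log (p x y / p x' y)
        ≤ ⨆ x'', ∑ y, p x y * Real.log (p x y / p x'' y) :=
          le_ciSup (f := fun x'' => ∑ y, p x y * Real.log (p x y / p x'' y))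
            (Finite.bddAbove_range _) x'
      _ ≤ ⨆ x₀, ⨆ x'', ∑ y, p x₀ y * Real.log (p x₀ y / p x'' y) :=
          le_ciSup (f := fun x₀ => ⨆ x'', ∑ y, p x₀ y * Real.log (p x₀ y / p x'' y))
            (Finite.bddAbove_range _) x
  -- part (i)
  have hNumMono : (∑ w, (μ w ({ω | (d ⟨T ω, fun i => ω i⟩ ∈ G s) ≠ (w ∈ G s)} ∩
        stopCell τ s)).toReal) ≤
      ∑ w, (μ w ({ω | d ⟨T ω, fun i => ω i⟩ ≠ w} ∩ stopCell τ s)).toReal := by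
    refine Finset.sum_le_sum fun w _ => ?_
    haveI := hprob w
    refine ENNReal.toReal_mono (measure_ne_top _ _) (measure_mono ?_)
    rintro ω ⟨h1, h2⟩
    exact ⟨fun he => h1 (by rw [he]), h2⟩
  refine ⟨div_le_div_of_nonneg_right hNumMono hs.le, ?_⟩
  -- ===== quantitative part =====
  -- the stopping predicate on the observation tree
  set stp : (j : ℕ) → (Fin j → Y) → Bool :=
    fun j u => decide (T (extseq y0 j u) ≤ j) with hstp
  have hstpT : ∀ (j : ℕ) (u : Fin j → Y), stp j u = true ↔ T (extseq y0 j u) ≤ j := by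
    intro j u; simp [hstp]
  -- consistency of T on cylinders
  have hTconst : ∀ (j : ℕ) (u : Fin j → Y) (k : ℕ), k ≤ j →
      ∀ ω ∈ cylinder j (extseq y0 j u), (T (extseq y0 j u) = k ↔ T ω = k) := by
    intro j u k hk ω hω
    exact hstopT k _ ω fun i hi => (hω i (lt_of_lt_of_le hi hk)).symm
  have hTconstCY : ∀ (j : ℕ) (u : Fin j → Y), T (extseq y0 j u) ≤ j →
      ∀ ω ∈ cylinder j (extseq y0 j u), T ω = T (extseq y0 j u) := by
    intro j u hT ω hω
    exact (hTconst j u _ hT ω hω).mp rfl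
  have hTgtCY : ∀ (j : ℕ) (u : Fin j → Y), j < T (extseq y0 j u) →
      ∀ ω ∈ cylinder j (extseq y0 j u), j < T ω := by
    intro j u hT ω hω
    by_contra hc
    push_neg at hc
    have := (hTconst j u (T ω) hc ω hω).mpr rfl
    omega
  have hInvStep : ∀ (j : ℕ) (u : Fin j → Y) (y : Y), ¬ T (extseq y0 j u) ≤ j →
      T (extseq y0 (j + 1) (Fin.snoc u y)) ≤ j + 1 →
      T (extseq y0 (j + 1) (Fin.snoc u y)) = j + 1 := by
    intro j u y hgt hle'
    have hmem : extseq y0 (j + 1) (Fin.snoc u y) ∈ cylinder j (extseq y0 j u) := by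
      rw [mem_cylinder_ext]
      intro i
      rw [extseq, dif_pos (Nat.lt_succ_of_lt i.2)]
      have he : (⟨i.1, Nat.lt_succ_of_lt i.2⟩ : Fin (j + 1)) = Fin.castSucc i := Fin.ext rfl
      rw [he, Fin.snoc_castSucc]
    have := hTgtCY j u (by omega) _ hmem
    omega
  -- measurability
  have hTn : ∀ n : ℕ, MeasurableSet {ω : ℕ → Y | T ω = n} := by
    intro n
    have hset : {ω : ℕ → Y | T ω = n} =
        ⋃ u : Fin n → Y, ⋃ _h : T (extseq y0 n u) = n, cylinder n (extseq y0 n u) := by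
      ext ω
      simp only [Set.mem_iUnion, Set.mem_setOf_eq]
      constructor
      · intro hω
        refine ⟨fun i => ω i, ?_, ?_⟩
        · refine (hstopT n ω _ fun i hi => ?_).mp hω
          rw [extseq, dif_pos hi]
        · rw [mem_cylinder_ext]
          intro i
          rfl
      · rintro ⟨u, hu, hmem⟩
        exact (hTconst n u n le_rfl ω hmem).mp hu
    rw [hset]
    exact MeasurableSet.iUnion fun u => MeasurableSet.iUnion fun _ => cylinder_measurable _ _
  have hTgtMeas : ∀ n : ℕ, MeasurableSet {ω : ℕ → Y | n < T ω} := by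
    intro n
    have hset : {ω : ℕ → Y | n < T ω} = (⋃ k : ℕ, ⋃ _h : k ≤ n, {ω | T ω = k})ᶜ := by
      ext ω
      simp only [Set.mem_compl_iff, Set.mem_iUnion, Set.mem_setOf_eq]
      constructor
      · rintro h ⟨k, hk, he⟩
        omega
      · intro h
        by_contra hc
        push_neg at hc
        exact h ⟨T ω, by omega, rfl⟩
    rw [hset]
    exact (MeasurableSet.iUnion fun k => MeasurableSet.iUnion fun _ => hTn k).compl
  have hbinMeas : ∀ w : W,
      MeasurableSet {ω : ℕ → Y | (d ⟨T ω, fun i => ω i⟩ ∈ H) ≠ (w ∈ H)} := by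
    intro w
    have hset : {ω : ℕ → Y | (d ⟨T ω, fun i => ω i⟩ ∈ H) ≠ (w ∈ H)} =
        ⋃ n : ℕ, ⋃ u : Fin n → Y, ⋃ _h : (d ⟨n, u⟩ ∈ H) ≠ (w ∈ H),
          ({ω | T ω = n} ∩ cylinder n (extseq y0 n u)) := by
      ext ω
      simp only [Set.mem_iUnion, Set.mem_setOf_eq, Set.mem_inter_iff]
      constructor
      · intro hω
        refine ⟨T ω, fun i => ω i, hω, rfl, ?_⟩
        rw [mem_cylinder_ext]
        intro i
        rfl
      · rintro ⟨n, u, hcond, hT, hmem⟩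
        have he : (⟨T ω, fun i => ω i⟩ : Σ n, Fin n → Y) = ⟨n, u⟩ :=
          sigma_leaf_eq _ _ hT ω u ((mem_cylinder_ext y0 u ω).mp hmem)
        rw [he]
        exact hcond
    rw [hset]
    exact .iUnion fun n => .iUnion fun u => .iUnion fun _ =>
      (hTn n).inter (cylinder_measurable _ _)
  -- partition of measures and integrals over children
  have hpart : ∀ (w : W) (S : Set (ℕ → Y)), MeasurableSet S → ∀ (j : ℕ) (u : Fin j → Y),
      (μ w (S ∩ cylinder j (extseq y0 j u))).toReal =
        ∑ y, (μ w (S ∩ cylinder (j + 1) (extseq y0 (j + 1) (Fin.snoc u y)))).toReal := by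
    intro w S hS j u
    haveI := hprob w
    have hset : S ∩ cylinder j (extseq y0 j u) =
        ⋃ y, S ∩ cylinder (j + 1) (extseq y0 (j + 1) (Fin.snoc u y)) := by
      rw [cylinder_ext_succ y0 j u, Set.inter_iUnion]
    rw [hset, measure_iUnion
      (fun y y' hne => ((cylinder_ext_disj y0 j u) hne).mono
        Set.inter_subset_right Set.inter_subset_right)
      (fun y => hS.inter (cylinder_measurable _ _)), tsum_fintype,
      ENNReal.toReal_sum (fun y _ => measure_ne_top _ _)]
  have hintpart : ∀ (w : W) (j : ℕ) (u : Fin j → Y),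
      ∫ ω in cylinder j (extseq y0 j u), (T ω : ℝ) ∂ μ w =
        ∑ y, ∫ ω in cylinder (j + 1) (extseq y0 (j + 1) (Fin.snoc u y)), (T ω : ℝ) ∂ μ w := by
    intro w j u
    rw [show cylinder j (extseq y0 j u) =
      ⋃ y, cylinder (j + 1) (extseq y0 (j + 1) (Fin.snoc u y)) from cylinder_ext_succ y0 j u]
    rw [MeasureTheory.integral_iUnion (fun y => cylinder_measurable _ _)
      (cylinder_ext_disj y0 j u) ((hTint w).integrableOn)]
    exact tsum_fintype _
  -- mixture bound
  have hmix : ∀ (H' K' : Finset W), H'.Nonempty → K'.Nonempty → ∀ (j : ℕ) (u : Fin j → Y),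
      ∑ y, Pmass p f H' (j + 1) (Fin.snoc u y) *
          Real.log (Pmass p f H' (j + 1) (Fin.snoc u y) / Pmass p f K' (j + 1) (Fin.snoc u y)) ≤
        Pmass p f H' j u * Real.log (Pmass p f H' j u / Pmass p f K' j u) +
          C1 * Pmass p f H' j u := by
    intro H' K' hH' hK' j u
    have h := mixtureKL p hpos hsum C1 hC1' H' K' hH' hK'
      (fun w => gf p f w j u) (fun w => gf p f w j u)
      (fun w _ => gf_pos p hpos f w j u) (fun w _ => gf_pos p hpos f w j u)
      (fun w => f w j u) (fun w => f w j u)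
    simp only [Pmass_snoc]
    simpa only [Pmass] using h
  -- top-node invariant
  have hInvTop : T (extseq y0 m s.2) ≤ m → T (extseq y0 m s.2) = m := by
    intro h
    have h2 := hle (extseq y0 m s.2)
    rw [hτext] at h2
    exact le_antisymm h h2
  -- leaf facts for the error claim
  have hleafSE : ∀ (j : ℕ) (u : Fin j → Y), T (extseq y0 j u) = j →
      (if d ⟨j, u⟩ ∈ H then Pmass p f K j u else Pmass p f H j u) ≤
      ∑ w, (μ w ({ω | (d ⟨T ω, fun i => ω i⟩ ∈ H) ≠ (w ∈ H)} ∩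
        cylinder j (extseq y0 j u))).toReal := by
    intro j u hTj
    have hconst : ∀ w : W, ((d ⟨j, u⟩ ∈ H) ≠ (w ∈ H)) →
        {ω | (d ⟨T ω, fun i => ω i⟩ ∈ H) ≠ (w ∈ H)} ∩ cylinder j (extseq y0 j u) =
          cylinder j (extseq y0 j u) := by
      intro w hw
      refine Set.inter_eq_self_of_subset_right ?_
      intro ω hω
      have hTω : T ω = j := by rw [hTconstCY j u (le_of_eq hTj) ω hω, hTj]
      have hσ : (⟨T ω, fun i => ω i⟩ : Σ n, Fin n → Y) = ⟨j, u⟩ :=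
        sigma_leaf_eq _ _ hTω ω u ((mem_cylinder_ext y0 u ω).mp hω)
      show (d ⟨T ω, fun i => ω i⟩ ∈ H) ≠ (w ∈ H)
      rw [hσ]
      exact hw
    by_cases hd : d ⟨j, u⟩ ∈ H
    · rw [if_pos hd]
      calc Pmass p f K j u
          = ∑ w ∈ K, (μ w ({ω | (d ⟨T ω, fun i => ω i⟩ ∈ H) ≠ (w ∈ H)} ∩
              cylinder j (extseq y0 j u))).toReal := by
            refine Finset.sum_congr rfl fun w hw => ?_
            rw [hconst w fun he => (Finset.mem_compl.mp (hK ▸ hw)) (he ▸ hd), hμcylR]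
        _ ≤ _ := Finset.sum_le_sum_of_subset_of_nonneg (Finset.subset_univ K)
            (fun _ _ _ => ENNReal.toReal_nonneg)
    · rw [if_neg hd]
      calc Pmass p f H j u
          = ∑ w ∈ H, (μ w ({ω | (d ⟨T ω, fun i => ω i⟩ ∈ H) ≠ (w ∈ H)} ∩
              cylinder j (extseq y0 j u))).toReal := by
            refine Finset.sum_congr rfl fun w hw => ?_
            rw [hconst w fun he => hd (he ▸ hw), hμcylR]
        _ ≤ _ := Finset.sum_le_sum_of_subset_of_nonneg (Finset.subset_univ H)
            (fun _ _ _ => ENNReal.toReal_nonneg)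
  -- M1 : error claim
  have hM1 : ∀ (dd j : ℕ) (u : Fin j → Y),
      (T (extseq y0 j u) ≤ j → T (extseq y0 j u) = j) →
      Csum stp (fun j u => if d ⟨j, u⟩ ∈ H then Pmass p f K j u else Pmass p f H j u)
        (fun _ _ => 0) dd j u ≤
      ∑ w, (μ w ({ω | (d ⟨T ω, fun i => ω i⟩ ∈ H) ≠ (w ∈ H)} ∩
        cylinder j (extseq y0 j u))).toReal := by
    intro dd
    induction dd with
    | zero =>
      intro j u hInv
      by_cases hst : stp j u
      · simp only [Csum, hst, if_true]
        exact hleafSE j u (hInv ((hstpT j u).mp hst))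
      · simp only [Csum, hst, Bool.false_eq_true, if_false]
        exact Finset.sum_nonneg fun _ _ => ENNReal.toReal_nonneg
    | succ dd ih =>
      intro j u hInv
      by_cases hst : stp j u
      · simp only [Csum, hst, if_true]
        exact hleafSE j u (hInv ((hstpT j u).mp hst))
      · simp only [Csum, hst, Bool.false_eq_true, if_false]
        have hgt : ¬ T (extseq y0 j u) ≤ j := fun h => hst ((hstpT j u).mpr h)
        calc ∑ y, Csum stp
              (fun j u => if d ⟨j, u⟩ ∈ H then Pmass p f K j u else Pmass p f H j u)
              (fun _ _ => 0) dd (j + 1) (Fin.snoc u y)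
            ≤ ∑ y, ∑ w, (μ w ({ω | (d ⟨T ω, fun i => ω i⟩ ∈ H) ≠ (w ∈ H)} ∩
                cylinder (j + 1) (extseq y0 (j + 1) (Fin.snoc u y)))).toReal :=
              Finset.sum_le_sum fun y _ => ih (j + 1) (Fin.snoc u y) (hInvStep j u y hgt)
          _ = ∑ w, ∑ y, (μ w ({ω | (d ⟨T ω, fun i => ω i⟩ ∈ H) ≠ (w ∈ H)} ∩
                cylinder (j + 1) (extseq y0 (j + 1) (Fin.snoc u y)))).toReal :=
              Finset.sum_comm
          _ = _ := Finset.sum_congr rfl fun w _ => (hpart w _ (hbinMeas w) j u).symm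
  -- M2 : residual mass claim
  have habP : ∀ (j : ℕ) (u : Fin j → Y),
      Pmass p f H j u + Pmass p f K j u = ∑ w, gf p f w j u := by
    intro j u
    rw [hH, hK, Pmass, Pmass, Finset.sum_add_sum_compl]
  have hM2 : ∀ (dd j : ℕ) (u : Fin j → Y),
      Csum stp (fun _ _ => 0) (fun j u => Pmass p f H j u + Pmass p f K j u) dd j u ≤
      ∑ w, (μ w ({ω | j + dd < T ω} ∩ cylinder j (extseq y0 j u))).toReal := by
    intro dd
    induction dd with
    | zero =>
      intro j u
      by_cases hst : stp j u
      · simp only [Csum, hst, if_true]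
        exact Finset.sum_nonneg fun _ _ => ENNReal.toReal_nonneg
      · simp only [Csum, hst, Bool.false_eq_true, if_false]
        have hgt : j < T (extseq y0 j u) := by
          have : ¬ T (extseq y0 j u) ≤ j := fun h => hst ((hstpT j u).mpr h)
          omega
        rw [habP]
        refine le_of_eq (Finset.sum_congr rfl fun w _ => ?_)
        rw [Set.inter_eq_self_of_subset_right fun ω hω => ?_, hμcylR]
        show j + 0 < T ω
        simpa using hTgtCY j u hgt ω hω
    | succ dd ih =>
      intro j u
      by_cases hst : stp j u
      · simp only [Csum, hst, if_true]
        exact Finset.sum_nonneg fun _ _ => ENNReal.toReal_nonneg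
      · simp only [Csum, hst, Bool.false_eq_true, if_false]
        calc ∑ y, Csum stp (fun _ _ => 0)
              (fun j u => Pmass p f H j u + Pmass p f K j u) dd (j + 1) (Fin.snoc u y)
            ≤ ∑ y, ∑ w, (μ w ({ω | (j + 1) + dd < T ω} ∩
                cylinder (j + 1) (extseq y0 (j + 1) (Fin.snoc u y)))).toReal :=
              Finset.sum_le_sum fun y _ => ih (j + 1) (Fin.snoc u y)
          _ = ∑ w, ∑ y, (μ w ({ω | (j + 1) + dd < T ω} ∩
                cylinder (j + 1) (extseq y0 (j + 1) (Fin.snoc u y)))).toReal :=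
              Finset.sum_comm
          _ = ∑ w, (μ w ({ω | (j + 1) + dd < T ω} ∩ cylinder j (extseq y0 j u))).toReal :=
              Finset.sum_congr rfl fun w _ => (hpart w _ (hTgtMeas _) j u).symm
          _ = _ := by
              rw [show (j + 1) + dd = j + (dd + 1) from by omega]
  -- M3 : expected-time claim
  have hM3 : ∀ (H' : Finset W) (dd j : ℕ) (u : Fin j → Y),
      (T (extseq y0 j u) ≤ j → T (extseq y0 j u) = j) →
      Csum stp (fun j u => (j : ℝ) * Pmass p f H' j u)
        (fun j u => (j : ℝ) * Pmass p f H' j u) dd j u ≤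
      ∑ w ∈ H', ∫ ω in cylinder j (extseq y0 j u), (T ω : ℝ) ∂ μ w := by
    intro H'
    have hleafJ : ∀ (j : ℕ) (u : Fin j → Y), T (extseq y0 j u) = j →
        (j : ℝ) * Pmass p f H' j u =
        ∑ w ∈ H', ∫ ω in cylinder j (extseq y0 j u), (T ω : ℝ) ∂ μ w := by
      intro j u hTj
      rw [Pmass, Finset.mul_sum]
      refine Finset.sum_congr rfl fun w _ => ?_
      haveI := hprob w
      rw [setIntegral_congr_fun (cylinder_measurable _ _)
        (fun ω hω => ?_), MeasureTheory.setIntegral_const, measureReal_def, hμcylR, smul_eq_mul, mul_comm]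
      show (T ω : ℝ) = (j : ℝ)
      rw [hTconstCY j u (le_of_eq hTj) ω hω, hTj]
    have hleafJ0 : ∀ (j : ℕ) (u : Fin j → Y), ¬ T (extseq y0 j u) ≤ j →
        (j : ℝ) * Pmass p f H' j u ≤
        ∑ w ∈ H', ∫ ω in cylinder j (extseq y0 j u), (T ω : ℝ) ∂ μ w := by
      intro j u hgt
      rw [Pmass, Finset.mul_sum]
      refine Finset.sum_le_sum fun w _ => ?_
      haveI := hprob w
      calc (j : ℝ) * gf p f w j u
          = ∫ _ω in cylinder j (extseq y0 j u), (j : ℝ) ∂ μ w := by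
            rw [MeasureTheory.setIntegral_const, measureReal_def, hμcylR, smul_eq_mul, mul_comm]
        _ ≤ _ := by
            refine setIntegral_mono_on
              (integrableOn_const (measure_ne_top _ _))
              ((hTint w).integrableOn) (cylinder_measurable _ _) fun ω hω => ?_
            have := hTgtCY j u (by omega) ω hω
            exact_mod_cast this.le
    intro dd
    induction dd with
    | zero =>
      intro j u hInv
      by_cases hst : stp j u
      · simp only [Csum, hst, if_true]
        exact le_of_eq (hleafJ j u (hInv ((hstpT j u).mp hst)))
      · simp only [Csum, hst, Bool.false_eq_true, if_false]
        exact hleafJ0 j u fun h => hst ((hstpT j u).mpr h)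
    | succ dd ih =>
      intro j u hInv
      by_cases hst : stp j u
      · simp only [Csum, hst, if_true]
        exact le_of_eq (hleafJ j u (hInv ((hstpT j u).mp hst)))
      · simp only [Csum, hst, Bool.false_eq_true, if_false]
        have hgt : ¬ T (extseq y0 j u) ≤ j := fun h => hst ((hstpT j u).mpr h)
        calc ∑ y, Csum stp (fun j u => (j : ℝ) * Pmass p f H' j u)
              (fun j u => (j : ℝ) * Pmass p f H' j u) dd (j + 1) (Fin.snoc u y)
            ≤ ∑ y, ∑ w ∈ H', ∫ ω in
                cylinder (j + 1) (extseq y0 (j + 1) (Fin.snoc u y)), (T ω : ℝ) ∂ μ w :=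
              Finset.sum_le_sum fun y _ => ih (j + 1) (Fin.snoc u y) (hInvStep j u y hgt)
          _ = ∑ w ∈ H', ∑ y, ∫ ω in
                cylinder (j + 1) (extseq y0 (j + 1) (Fin.snoc u y)), (T ω : ℝ) ∂ μ w :=
              Finset.sum_comm
          _ = _ := Finset.sum_congr rfl fun w _ => (hintpart w j u).symm
  -- Markov bound
  have hMarkov : ∀ (w : W) (n : ℕ),
      (μ w {ω | n < T ω}).toReal * ((n : ℝ) + 1) ≤ ∫ ω, (T ω : ℝ) ∂ μ w := by
    intro w n
    haveI := hprob w
    have h1 : ∫ _ω in {ω | n < T ω}, ((n : ℝ) + 1) ∂ μ w ≤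
        ∫ ω in {ω | n < T ω}, (T ω : ℝ) ∂ μ w := by
      refine setIntegral_mono_on (integrableOn_const (measure_ne_top _ _))
        ((hTint w).integrableOn) (hTgtMeas n) fun ω hω => ?_
      have : (n : ℕ) + 1 ≤ T ω := hω
      exact_mod_cast this
    have h2 : ∫ ω in {ω | n < T ω}, (T ω : ℝ) ∂ μ w ≤ ∫ ω, (T ω : ℝ) ∂ μ w :=
      setIntegral_le_integral (hTint w) (Filter.Eventually.of_forall fun ω => Nat.cast_nonneg _)
    rw [MeasureTheory.setIntegral_const, measureReal_def, smul_eq_mul, mul_comm] at h1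
    linarith
  -- integral over the cell
  have hintA : ∀ w : W, ∫ ω in stopCell τ s, ((T ω : ℝ) - (τ ω : ℝ)) ∂ μ w =
      (∫ ω in cylinder m (extseq y0 m s.2), (T ω : ℝ) ∂ μ w) - (m : ℝ) * gf p f w m s.2 := by
    intro w
    haveI := hprob w
    rw [hA]
    have h1 : ∀ ω ∈ cylinder m (extseq y0 m s.2),
        ((T ω : ℝ) - (τ ω : ℝ)) = (T ω : ℝ) - (m : ℝ) := by
      intro ω hω
      have hτω : τ ω = m := by
        refine (hstopτ m (extseq y0 m s.2) ω fun i hi => ?_).mp hτext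
        rw [extseq, dif_pos hi]
        exact (((mem_cylinder_ext y0 s.2 ω).mp hω) ⟨i, hi⟩).symm
      rw [hτω]
    rw [setIntegral_congr_fun (cylinder_measurable _ _) h1]
    rw [MeasureTheory.integral_sub ((hTint w).integrableOn)
      (integrableOn_const (measure_ne_top _ _))]
    rw [MeasureTheory.setIntegral_const, measureReal_def, hμcylR, smul_eq_mul, mul_comm]
  have hab : a + b = ∑ w, gf p f w m s.2 := habP m s.2
  have hSsum : (∑ w, ∫ ω in stopCell τ s, ((T ω : ℝ) - (τ ω : ℝ)) ∂ μ w) =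
      (∑ w, ∫ ω in cylinder m (extseq y0 m s.2), (T ω : ℝ) ∂ μ w) - (m : ℝ) * (a + b) := by
    rw [Finset.sum_congr rfl fun w _ => hintA w, Finset.sum_sub_distrib, ← Finset.mul_sum, ← hab]
  -- abbreviations
  set Ssum := ∑ w, ∫ ω in stopCell τ s, ((T ω : ℝ) - (τ ω : ℝ)) ∂ μ w with hSsumDef
  set errN := ∑ w, (μ w ({ω | d ⟨T ω, fun i => ω i⟩ ≠ w} ∩ stopCell τ s)).toReal with herrNDef
  set Z := ∑ w, (μ w (stopCell τ s)).toReal with hZDef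
  set IA := ∑ w, ∫ ω in cylinder m (extseq y0 m s.2), (T ω : ℝ) ∂ μ w with hIADef
  set IT := ∑ w, ∫ ω, (T ω : ℝ) ∂ μ w with hITDef
  set EX := Real.exp (-(C1 * (Ssum / Z))) with hEXDef
  have hEXpos : 0 < EX := Real.exp_pos _
  have hITnn : 0 ≤ IT := Finset.sum_nonneg fun w _ =>
    integral_nonneg fun ω => Nat.cast_nonneg _
  -- key bound for each horizon
  have hkey : ∀ dd : ℕ,
      a * b / (a + b) * EX - IT / ((m : ℝ) + dd + 1) ≤ errN := by
    intro dd
    have hPH : ∀ (j : ℕ) (u : Fin j → Y), 0 < Pmass p f H j u := Pmass_pos p hpos f H hHne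
    have hPK : ∀ (j : ℕ) (u : Fin j → Y), 0 < Pmass p f K j u := Pmass_pos p hpos f K hKne
    have hconsH : ∀ (j : ℕ) (u : Fin j → Y),
        ∑ y, Pmass p f H (j + 1) (Fin.snoc u y) = Pmass p f H j u := Pmass_sum_snoc p hsum f H
    have hconsK : ∀ (j : ℕ) (u : Fin j → Y),
        ∑ y, Pmass p f K (j + 1) (Fin.snoc u y) = Pmass p f K j u := Pmass_sum_snoc p hsum f K
    have hchH := chainRuleKL stp C1 (Pmass p f H) (Pmass p f K) hconsH
      (hmix H K hHne hKne) dd m s.2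
    have hchK := chainRuleKL stp C1 (Pmass p f K) (Pmass p f H) hconsK
      (hmix K H hKne hHne) dd m s.2
    have hjH := jensenBC stp (Pmass p f H) (Pmass p f K) hPH hPK hconsH dd m s.2
    have hjK := jensenBC stp (Pmass p f K) (Pmass p f H) hPK hPH hconsK dd m s.2
    have hBCswap : Csum stp (fun j u => Real.sqrt (Pmass p f K j u * Pmass p f H j u))
        (fun j u => Real.sqrt (Pmass p f K j u * Pmass p f H j u)) dd m s.2 =
        Csum stp (fun j u => Real.sqrt (Pmass p f H j u * Pmass p f K j u))
        (fun j u => Real.sqrt (Pmass p f H j u * Pmass p f K j u)) dd m s.2 :=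
      Csum_congr stp (fun j u => by rw [mul_comm]) (fun j u => by rw [mul_comm]) dd m s.2
    rw [hBCswap] at hjK
    have hcs := Csum_cs stp
      (l := fun j u => Real.sqrt (Pmass p f H j u * Pmass p f K j u))
      (mn := fun j u => min (Pmass p f H j u) (Pmass p f K j u))
      (mx := fun j u => max (Pmass p f H j u) (Pmass p f K j u))
      (fun j u => Real.sqrt_nonneg _)
      (fun j u => le_min (hPH j u).le (hPK j u).le)
      (fun j u => le_max_of_le_left (hPH j u).le)
      (fun j u => by
        rw [Real.sq_sqrt (mul_nonneg (hPH j u).le (hPK j u).le), min_mul_max])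
      dd m s.2
    have hmx2 : Csum stp (fun j u => Pmass p f H j u + Pmass p f K j u)
        (fun j u => Pmass p f H j u + Pmass p f K j u) dd m s.2 = a + b := by
      rw [Csum_conserve stp (fun j u => by
        rw [Finset.sum_add_distrib, hconsH, hconsK]) dd m s.2, ← haa, ← hbb]
    have hMX : Csum stp (fun j u => max (Pmass p f H j u) (Pmass p f K j u))
        (fun j u => max (Pmass p f H j u) (Pmass p f K j u)) dd m s.2 ≤ a + b := by
      refine le_trans (Csum_mono stp ?_ ?_ dd m s.2) (le_of_eq hmx2) <;>
        exact fun j u => max_le_add_of_nonneg (hPH j u).le (hPK j u).le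
    have hmn := Csum_mono stp
      (lf := fun j u => min (Pmass p f H j u) (Pmass p f K j u))
      (lf0 := fun j u => min (Pmass p f H j u) (Pmass p f K j u))
      (lf' := fun j u => (if d ⟨j, u⟩ ∈ H then Pmass p f K j u else Pmass p f H j u) + 0)
      (lf0' := fun j u => 0 + (Pmass p f H j u + Pmass p f K j u))
      (fun j u => by
        split_ifs with hd
        · simpa using min_le_right _ _
        · simpa using min_le_left _ _)
      (fun j u => by
        rw [zero_add]
        exact le_trans (min_le_left _ _) (le_add_of_nonneg_right (hPK j u).le))
      dd m s.2
    rw [Csum_add stp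
      (fun j u => if d ⟨j, u⟩ ∈ H then Pmass p f K j u else Pmass p f H j u)
      (fun _ _ => (0 : ℝ)) (fun _ _ => (0 : ℝ))
      (fun j u => Pmass p f H j u + Pmass p f K j u) dd m s.2] at hmn
    have hSE := hM1 dd m s.2 hInvTop
    rw [← hA] at hSE
    have hSEerr : Csum stp
        (fun j u => if d ⟨j, u⟩ ∈ H then Pmass p f K j u else Pmass p f H j u)
        (fun _ _ => (0 : ℝ)) dd m s.2 ≤ errN := le_trans hSE hNumMono
    have hRES := hM2 dd m s.2
    have hRES2 : Csum stp (fun _ _ => (0 : ℝ))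
        (fun j u => Pmass p f H j u + Pmass p f K j u) dd m s.2 ≤
        IT / ((m : ℝ) + dd + 1) := by
      refine le_trans hRES ?_
      have hstep1 : ∀ w : W,
          (μ w ({ω | m + dd < T ω} ∩ cylinder m (extseq y0 m s.2))).toReal ≤
          (∫ ω, (T ω : ℝ) ∂ μ w) / ((m : ℝ) + dd + 1) := by
        intro w
        haveI := hprob w
        have h1 : (μ w ({ω | m + dd < T ω} ∩ cylinder m (extseq y0 m s.2))).toReal ≤
            (μ w {ω | m + dd < T ω}).toReal :=
          ENNReal.toReal_mono (measure_ne_top _ _) (measure_mono Set.inter_subset_left)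
        have h2 := hMarkov w (m + dd)
        rw [le_div_iff₀ (by positivity)]
        push_cast at h2 ⊢
        nlinarith [ENNReal.toReal_nonneg (a := μ w {ω | m + dd < T ω})]
      calc ∑ w, (μ w ({ω | m + dd < T ω} ∩ cylinder m (extseq y0 m s.2))).toReal
          ≤ ∑ w, (∫ ω, (T ω : ℝ) ∂ μ w) / ((m : ℝ) + dd + 1) :=
            Finset.sum_le_sum fun w _ => hstep1 w
        _ = IT / ((m : ℝ) + dd + 1) := by rw [hITDef, Finset.sum_div]
    have hJH := hM3 H dd m s.2 hInvTop
    have hJK := hM3 K dd m s.2 hInvTop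
    have hIHK : (∑ w ∈ H, ∫ ω in cylinder m (extseq y0 m s.2), (T ω : ℝ) ∂ μ w) +
        (∑ w ∈ K, ∫ ω in cylinder m (extseq y0 m s.2), (T ω : ℝ) ∂ μ w) = IA := by
      rw [hIADef, hH, hK]
      exact Finset.sum_add_sum_compl _ _
    rw [← haa, ← hbb] at hchH hchK hjH hjK
    rw [mul_comm b a] at hjK
    -- abstract the large quantities
    set CDH := Csum stp
      (fun j u => Pmass p f H j u * Real.log (Pmass p f H j u / Pmass p f K j u))
      (fun j u => Pmass p f H j u * Real.log (Pmass p f H j u / Pmass p f K j u))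
      dd m s.2 with hCDH
    set CDK := Csum stp
      (fun j u => Pmass p f K j u * Real.log (Pmass p f K j u / Pmass p f H j u))
      (fun j u => Pmass p f K j u * Real.log (Pmass p f K j u / Pmass p f H j u))
      dd m s.2 with hCDK
    set CJH := Csum stp (fun j u => (j : ℝ) * Pmass p f H j u)
      (fun j u => (j : ℝ) * Pmass p f H j u) dd m s.2 with hCJH
    set CJK := Csum stp (fun j u => (j : ℝ) * Pmass p f K j u)
      (fun j u => (j : ℝ) * Pmass p f K j u) dd m s.2 with hCJK
    set CBC := Csum stp (fun j u => Real.sqrt (Pmass p f H j u * Pmass p f K j u))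
      (fun j u => Real.sqrt (Pmass p f H j u * Pmass p f K j u)) dd m s.2 with hCBC
    set CMN := Csum stp (fun j u => min (Pmass p f H j u) (Pmass p f K j u))
      (fun j u => min (Pmass p f H j u) (Pmass p f K j u)) dd m s.2 with hCMN
    set CMX := Csum stp (fun j u => max (Pmass p f H j u) (Pmass p f K j u))
      (fun j u => max (Pmass p f H j u) (Pmass p f K j u)) dd m s.2 with hCMX
    set CSE := Csum stp
      (fun j u => if d ⟨j, u⟩ ∈ H then Pmass p f K j u else Pmass p f H j u)
      (fun _ _ => (0 : ℝ)) dd m s.2 with hCSE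
    set CRES := Csum stp (fun _ _ => (0 : ℝ))
      (fun j u => Pmass p f H j u + Pmass p f K j u) dd m s.2 with hCRES
    set SIH := ∑ w ∈ H, ∫ ω in cylinder m (extseq y0 m s.2), (T ω : ℝ) ∂ μ w with hSIH
    set SIK := ∑ w ∈ K, ∫ ω in cylinder m (extseq y0 m s.2), (T ω : ℝ) ∂ μ w with hSIK
    -- arithmetic endgame with small atoms
    have e0H : a * (CDH / a - Real.log (a / b)) = CDH - a * Real.log (a / b) := by
      rw [mul_sub, mul_comm a _, div_mul_cancel₀ _ hapos.ne']
    have e0K : b * (CDK / b - Real.log (b / a)) = CDK - b * Real.log (b / a) := by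
      rw [mul_sub, mul_comm b _, div_mul_cancel₀ _ hbpos.ne']
    have hJH' : C1 * (CJH - (m : ℝ) * a) ≤ C1 * (SIH - (m : ℝ) * a) :=
      mul_le_mul_of_nonneg_left (by linarith [hJH]) hC1.le
    have hJK' : C1 * (CJK - (m : ℝ) * b) ≤ C1 * (SIK - (m : ℝ) * b) :=
      mul_le_mul_of_nonneg_left (by linarith [hJK]) hC1.le
    have hCSsum : C1 * Ssum =
        C1 * (SIH - (m : ℝ) * a) + C1 * (SIK - (m : ℝ) * b) := by
      rw [hSsum, ← hIHK]
      ring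
    have hxsum : a * (CDH / a - Real.log (a / b)) + b * (CDK / b - Real.log (b / a)) ≤
        C1 * Ssum := by
      rw [e0H, e0K, hCSsum]
      linarith [hchH, hchK, hJH', hJK']
    have hminle : min (CDH / a - Real.log (a / b)) (CDK / b - Real.log (b / a)) ≤
        C1 * (Ssum / Z) := by
      have h3 : C1 * (Ssum / Z) * (a + b) = C1 * Ssum := by
        rw [hZ]
        field_simp
      refine le_of_mul_le_mul_right ?_ hZpos
      rw [h3]
      rcases le_total (CDH / a - Real.log (a / b)) (CDK / b - Real.log (b / a)) with h | h
      · rw [min_eq_left h]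
        calc (CDH / a - Real.log (a / b)) * (a + b)
            = a * (CDH / a - Real.log (a / b)) + b * (CDH / a - Real.log (a / b)) := by ring
          _ ≤ a * (CDH / a - Real.log (a / b)) + b * (CDK / b - Real.log (b / a)) :=
              add_le_add_right (mul_le_mul_of_nonneg_left h hbpos.le) _
          _ ≤ C1 * Ssum := hxsum
      · rw [min_eq_right h]
        calc (CDK / b - Real.log (b / a)) * (a + b)
            = a * (CDK / b - Real.log (b / a)) + b * (CDK / b - Real.log (b / a)) := by ring
          _ ≤ a * (CDH / a - Real.log (a / b)) + b * (CDK / b - Real.log (b / a)) :=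
              add_le_add_left (mul_le_mul_of_nonneg_left h hapos.le) _
          _ ≤ C1 * Ssum := hxsum
    have hBClb : Real.sqrt (a * b) * Real.exp (-(C1 * (Ssum / Z)) / 2) ≤ CBC := by
      rcases le_total (CDH / a - Real.log (a / b)) (CDK / b - Real.log (b / a)) with h | h
      · refine le_trans ?_ hjH
        refine mul_le_mul_of_nonneg_left (Real.exp_le_exp.2 ?_) (Real.sqrt_nonneg _)
        have := hminle
        rw [min_eq_left h] at this
        linarith
      · refine le_trans ?_ hjK
        refine mul_le_mul_of_nonneg_left (Real.exp_le_exp.2 ?_) (Real.sqrt_nonneg _)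
        have := hminle
        rw [min_eq_right h] at this
        linarith
    have hsq : (Real.sqrt (a * b) * Real.exp (-(C1 * (Ssum / Z)) / 2)) ^ 2 = a * b * EX := by
      rw [mul_pow, Real.sq_sqrt (by positivity), pow_two, ← Real.exp_add, hEXDef]
      congr 2
      ring
    have hBC2 : a * b * EX ≤ CBC ^ 2 := by
      rw [← hsq]
      exact pow_le_pow_left₀ (by positivity) hBClb 2
    have hMNnn : 0 ≤ CMN := by
      rw [hCMN]
      exact Csum_nonneg stp (fun j u => le_min (hPH j u).le (hPK j u).le)
        (fun j u => le_min (hPH j u).le (hPK j u).le) dd m s.2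
    have hMNbig : a * b * EX ≤ CMN * (a + b) :=
      le_trans hBC2 (le_trans hcs (mul_le_mul_of_nonneg_left hMX hMNnn))
    have hMNdiv : a * b / (a + b) * EX ≤ CMN := by
      refine le_of_mul_le_mul_right ?_ hZpos
      calc a * b / (a + b) * EX * (a + b) = a * b * EX := by field_simp
        _ ≤ _ := hMNbig
    linarith [hmn, hSEerr, hRES2, hMNdiv]
  -- choose the horizon
  have hldEX : 0 < lam * δ / 4 * EX := by positivity
  have hεpos : 0 < lam * δ / 4 * EX * (a + b) := mul_pos hldEX hZpos
  obtain ⟨n0, hn0⟩ := exists_nat_ge (IT / (lam * δ / 4 * EX * (a + b)))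
  have htail : IT / ((m : ℝ) + n0 + 1) ≤ lam * δ / 4 * EX * (a + b) := by
    rw [div_le_iff₀ (by positivity)]
    rw [div_le_iff₀ hεpos] at hn0
    nlinarith [hεpos.le, Nat.cast_nonneg (α := ℝ) m]
  have hmain := hkey n0
  have habl : lam * δ / 2 * ((a + b) * EX) ≤ a * b / (a + b) * EX := by
    have h1 : lam * δ / 2 * (a + b) ^ 2 ≤ a * b := by
      nlinarith [mul_nonneg (sub_nonneg.2 haZ) (sub_nonneg.2 hbZ), hld, hld2,
        mul_nonneg (mul_nonneg hld.le (by linarith : (0 : ℝ) ≤ 1 / 2 - lam * δ))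
          (sq_nonneg (a + b))]
    have h2 : lam * δ / 2 * (a + b) ≤ a * b / (a + b) := by
      rw [le_div_iff₀ hZpos]
      nlinarith [h1]
    calc lam * δ / 2 * ((a + b) * EX) = (lam * δ / 2 * (a + b)) * EX := by ring
      _ ≤ (a * b / (a + b)) * EX := mul_le_mul_of_nonneg_right h2 hEXpos.le
  rw [hZ, le_div_iff₀ hZpos]
  nlinarith [hmain, habl, htail]
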